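/- arXiv:2402.17301 — 5 statements merged into one kernel-verified Lean document; each statement's English description precedes it below -/
import Mathlib

section
/- Let G be a real matrix indexed by finite sets I_A × I_B, and let V be a real positive semidefinite matrix indexed by I_B × I_B with V_{yy} = 1 for all y ∈ I_B. Then there exist a dimension d and unit vectors u_x, v_y ∈ ℝ^d (for x ∈ I_A, y ∈ I_B) such that for all x ∈ I_A with ∑_{s,y} G_{xs} G_{xy} V_{sy} ≠ 0, we have √(∑_{s,y ∈ I_B} G_{xs} G_{xy} V_{sy}) = ∑_{y ∈ I_B} G_{xy} ⟨u_x, v_y⟩. -/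
open scoped InnerProductSpace

/-- existence of unit vectors realizing the square-root quantity. -/
theorem stmt0 {IA IB : Type*} [Fintype IA] [Fintype IB] [Nonempty IA] [Nonempty IB]
    (G : IA → IB → ℝ) (V : Matrix IB IB ℝ) (hV : V.PosSemidef)
    (hdiag : ∀ y, V y y = 1) :
    ∃ (d : ℕ) (u : IA → EuclideanSpace ℝ (Fin d)) (v : IB → EuclideanSpace ℝ (Fin d)),
      (∀ x, ‖u x‖ = 1) ∧ (∀ y, ‖v y‖ = 1) ∧
      ∀ x, (∑ s, ∑ y, G x s * G x y * V s y) ≠ 0 →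
        Real.sqrt (∑ s, ∑ y, G x s * G x y * V s y)
          = ∑ y, G x y * ⟪u x, v y⟫_ℝ := by
  classical
  obtain ⟨B, hB⟩ : ∃ B : Matrix IB IB ℝ, V = Matrix.conjTranspose B * B := by
    open scoped MatrixOrder in
    obtain ⟨X, hX, -, hXX⟩ :=
      sub_zero V ▸ CFC.exists_sqrt_of_isSelfAdjoint_of_quasispectrumRestricts hV.isHermitian
        (QuasispectrumRestricts.nnreal_of_nonneg hV.nonneg)
    refine ⟨X, ?_⟩
    rw [← sub_zero V, ← hXX]
    exact (congrArg (· * X) hX.star_eq).symm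
  set d := Fintype.card IB with hd
  set e : IB ≃ Fin d := Fintype.equivFin IB with he
  set v : IB → EuclideanSpace ℝ (Fin d) := fun y => WithLp.toLp 2 (fun i => B (e.symm i) y) with hv
  have hinner : ∀ s y, ⟪v s, v y⟫_ℝ = V s y := by
    intro s y
    rw [hB]
    simp only [PiLp.inner_apply, RCLike.inner_apply, Matrix.mul_apply,
      Matrix.conjTranspose_apply, hv, starRingEnd_apply, star_trivial, WithLp.ofLp_toLp]
    rw [← e.symm.sum_comp (fun j => B j s * B j y)]
    exact Finset.sum_congr rfl fun i _ => mul_comm _ _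
  have hnorm : ∀ y, ‖v y‖ = 1 := by
    intro y
    have h1 : ‖v y‖ ^ 2 = 1 := by
      rw [← real_inner_self_eq_norm_sq, hinner, hdiag]
    nlinarith [norm_nonneg (v y)]
  set w : IA → EuclideanSpace ℝ (Fin d) := fun x => ∑ y, G x y • v y with hw
  have hww : ∀ x, ⟪w x, w x⟫_ℝ = ∑ s, ∑ y, G x s * G x y * V s y := by
    intro x
    rw [hw]
    simp only [sum_inner, inner_sum, real_inner_smul_left, real_inner_smul_right,
      Finset.mul_sum]
    refine Finset.sum_congr rfl fun s _ => Finset.sum_congr rfl fun y _ => ?_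
    have hsym : V y s = V s y := by
      have := congrFun (congrFun hV.1 s) y
      simpa [Matrix.conjTranspose_apply] using this
    rw [hinner, hsym]; ring
  set y0 := Classical.arbitrary IB
  set u : IA → EuclideanSpace ℝ (Fin d) := fun x =>
    if w x = 0 then v y0 else ‖w x‖⁻¹ • w x with hu
  refine ⟨d, u, v, fun x => ?_, hnorm, fun x hx => ?_⟩
  · rw [hu]
    by_cases h : w x = 0
    · simp [h, hnorm]
    · simp [h, norm_smul, abs_of_nonneg (inv_nonneg.mpr (norm_nonneg _)),
        inv_mul_cancel₀ (norm_ne_zero_iff.mpr h)]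
  · have hwx : w x ≠ 0 := by
      intro h
      apply hx
      rw [← hww, h, inner_zero_left]
    have hsum : ∑ y, G x y * ⟪u x, v y⟫_ℝ = ⟪u x, w x⟫_ℝ := by
      rw [hw]
      simp only [inner_sum, inner_smul_right]
    rw [hsum, hu]
    simp only [hwx, if_false, inner_smul_left, starRingEnd_apply, star_trivial]
    rw [real_inner_self_eq_norm_sq, ← hww, real_inner_self_eq_norm_sq,
      Real.sqrt_sq (norm_nonneg _)]
    have hn : ‖w x‖ ≠ 0 := norm_ne_zero_iff.mpr hwx
    field_simp
end

section
/- Let V be a real symmetric positive semidefinite matrix with unit diagonal, indexed by a finite set I_B. Then for any real matrix G indexed by I_A × I_B, the quantity ∑_{x ∈ I_A} √(∑_{s,y ∈ I_B} G_{xs} G_{xy} V_{sy}) is at most the optimal vector bias β*(G) := sup over dimensions d and unit vectors {u_x}, {v_y} ⊆ ℝ^d of ∑_{x,y} G_{xy} ⟨u_x, v_y⟩. -/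
open scoped InnerProductSpace

/-- the square-root quantity is at most the optimal vector bias. -/
theorem stmt1 {IA IB : Type*} [Fintype IA] [Fintype IB] [Nonempty IA] [Nonempty IB]
    (G : IA → IB → ℝ) (V : Matrix IB IB ℝ) (hV : V.PosSemidef)
    (hdiag : ∀ y, V y y = 1) :
    ∑ x, Real.sqrt (∑ s, ∑ y, G x s * G x y * V s y) ≤
      sSup {b : ℝ |
        ∃ (d : ℕ) (u : IA → EuclideanSpace ℝ (Fin d)) (v : IB → EuclideanSpace ℝ (Fin d)),
          (∀ x, ‖u x‖ = 1) ∧ (∀ y, ‖v y‖ = 1) ∧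
          b = ∑ x, ∑ y, G x y * ⟪u x, v y⟫_ℝ} := by
  classical
  set d := Fintype.card IB with hd
  have hdpos : 0 < d := Fintype.card_pos
  obtain ⟨B, hB⟩ : ∃ B : Matrix IB IB ℝ, V = Matrix.conjTranspose B * B := by
    open scoped MatrixOrder Matrix.Norms.L2Operator in
    obtain ⟨B, hB⟩ := CStarAlgebra.nonneg_iff_eq_star_mul_self.mp hV.nonneg
    exact ⟨B, hB⟩
  let e := Fintype.equivFin IB
  let v : IB → EuclideanSpace ℝ (Fin d) := fun y => WithLp.toLp 2 (fun i => B (e.symm i) y : Fin d → ℝ)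
  have hvinner : ∀ s y, ⟪v s, v y⟫_ℝ = V s y := by
    intro s y
    rw [hB]
    rw [PiLp.inner_apply]
    simp only [RCLike.inner_apply, conj_trivial, Matrix.mul_apply, Matrix.conjTranspose_apply,
      star_trivial]
    exact Fintype.sum_equiv e.symm _ _ (fun i => by simp [v, mul_comm])
  have hvnorm : ∀ y, ‖v y‖ = 1 := by
    intro y
    have h : ‖v y‖ ^ 2 = 1 := by
      rw [← real_inner_self_eq_norm_sq, hvinner, hdiag]
    nlinarith [norm_nonneg (v y)]
  let w : IA → EuclideanSpace ℝ (Fin d) := fun x => ∑ y, G x y • v y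
  have hsum : ∀ x, ∑ s, ∑ y, G x s * G x y * V s y = ‖w x‖ ^ 2 := by
    intro x
    rw [← real_inner_self_eq_norm_sq]
    simp only [w, sum_inner, inner_sum, real_inner_smul_left, real_inner_smul_right]
    refine Finset.sum_congr rfl fun s _ => Finset.sum_congr rfl fun y _ => ?_
    rw [hvinner, show V y s = V s y from (hV.isHermitian.apply s y).trans (star_trivial _)]; ring
  let u : IA → EuclideanSpace ℝ (Fin d) := fun x =>
    if h : w x = 0 then EuclideanSpace.single ⟨0, hdpos⟩ (1 : ℝ) else ‖w x‖⁻¹ • w x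
  have hunorm : ∀ x, ‖u x‖ = 1 := by
    intro x
    simp only [u]
    split_ifs with h
    · simp [EuclideanSpace.norm_single]
    · rw [norm_smul, norm_inv, norm_norm, inv_mul_cancel₀ (norm_ne_zero_iff.mpr h)]
  have huw : ∀ x, ⟪u x, w x⟫_ℝ = ‖w x‖ := by
    intro x
    simp only [u]
    split_ifs with h
    · simp [h]
    · rw [real_inner_smul_left, real_inner_self_eq_norm_sq]
      rw [sq, inv_mul_cancel_left₀ (norm_ne_zero_iff.mpr h)]
  have hmem : (∑ x, Real.sqrt (∑ s, ∑ y, G x s * G x y * V s y)) ∈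
      {b : ℝ | ∃ (d : ℕ) (u : IA → EuclideanSpace ℝ (Fin d)) (v : IB → EuclideanSpace ℝ (Fin d)),
        (∀ x, ‖u x‖ = 1) ∧ (∀ y, ‖v y‖ = 1) ∧ b = ∑ x, ∑ y, G x y * ⟪u x, v y⟫_ℝ} := by
    refine ⟨d, u, v, hunorm, hvnorm, ?_⟩
    refine Finset.sum_congr rfl fun x _ => ?_
    rw [hsum x, Real.sqrt_sq (norm_nonneg _), ← huw x]
    simp only [w, inner_sum, real_inner_smul_right]
  have hbdd : BddAbove {b : ℝ | ∃ (d : ℕ) (u : IA → EuclideanSpace ℝ (Fin d))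
      (v : IB → EuclideanSpace ℝ (Fin d)),
      (∀ x, ‖u x‖ = 1) ∧ (∀ y, ‖v y‖ = 1) ∧ b = ∑ x, ∑ y, G x y * ⟪u x, v y⟫_ℝ} := by
    refine ⟨∑ x, ∑ y, |G x y|, ?_⟩
    rintro b ⟨d', u', v', hu', hv', rfl⟩
    refine Finset.sum_le_sum fun x _ => Finset.sum_le_sum fun y _ => ?_
    calc G x y * ⟪u' x, v' y⟫_ℝ ≤ |G x y * ⟪u' x, v' y⟫_ℝ| := le_abs_self _
      _ = |G x y| * |⟪u' x, v' y⟫_ℝ| := abs_mul _ _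
      _ ≤ |G x y| * 1 := by
          refine mul_le_mul_of_nonneg_left ?_ (abs_nonneg _)
          calc |⟪u' x, v' y⟫_ℝ| ≤ ‖u' x‖ * ‖v' y‖ := abs_real_inner_le_norm _ _
            _ = 1 := by rw [hu', hv', mul_one]
      _ = |G x y| := mul_one _
  exact le_csSup hbdd hmem
end

section
/- Let A be a *-algebra over ℂ with self-adjoint generators a_x (x ∈ I_A) and b_y (y ∈ I_B) satisfying a_x² = 1 and b_y² = 1, where the a_x commute with the b_y. Let G be a real I_A × I_B matrix, r ∈ ℝ^{I_A} with r_x > 0, c ∈ ℝ^{I_B}, and suppose the block matrix [[Δ(r), −Gᵀ], [−G, Δ(c)]] is positive semidefinite. Set β := (1/2)(∑_x r_x + ∑_y c_y) and b̂_x := (1/r_x) ∑_y G_{xy} b_y. Then β·1 − ∑_{x,y} G_{xy} a_x b_y = ∑_x (r_x/2)(a_x − b̂_x)² + (1/2) bᵀ(Δ(c) − Gᵀ Δ(r)⁻¹ G) b, where b is the column vector of the b_y, and in particular the right-hand side is a sum of hermitian squares (since Δ(c) − Gᵀ Δ(r)⁻¹ G ⪰ 0). -/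
/-- the nice SOS certificate for XOR games. -/
theorem stmt5 {A : Type*} [Ring A] [Algebra ℂ A] [StarRing A] [StarModule ℂ A]
    {IA IB : Type*} [Fintype IA] [Fintype IB] [DecidableEq IA] [DecidableEq IB]
    (a : IA → A) (b : IB → A)
    (ha_sa : ∀ x, star (a x) = a x) (hb_sa : ∀ y, star (b y) = b y)
    (ha_sq : ∀ x, a x * a x = 1) (hb_sq : ∀ y, b y * b y = 1)
    (hcomm : ∀ x y, a x * b y = b y * a x)
    (G : Matrix IA IB ℝ) (r : IA → ℝ) (c : IB → ℝ) (hr : ∀ x, 0 < r x)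
    (hblock : (Matrix.fromBlocks (Matrix.diagonal r) (-G)
        (-G.transpose) (Matrix.diagonal c)).PosSemidef)
    (β : ℝ) (hβ : β = (1 / 2) * (∑ x, r x + ∑ y, c y))
    (bhat : IA → A)
    (hbhat : ∀ x, bhat x = ((r x : ℂ))⁻¹ • ∑ y, (G x y : ℂ) • b y) :
    ((β : ℂ) • (1 : A) - ∑ x, ∑ y, (G x y : ℂ) • (a x * b y)
        = (∑ x, ((r x / 2 : ℝ) : ℂ) • (a x - bhat x) ^ 2)
          + (1 / 2 : ℂ) • ∑ s, ∑ y,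
              (((Matrix.diagonal c - G.transpose * (Matrix.diagonal r)⁻¹ * G) s y : ℝ) : ℂ)
                • (b s * b y))
      ∧ ∃ (k : ℕ) (q : Fin k → A),
          (β : ℂ) • (1 : A) - ∑ x, ∑ y, (G x y : ℂ) • (a x * b y)
            = ∑ i, star (q i) * q i := by
  classical
  have hr0 : ∀ x, (r x : ℝ) ≠ 0 := fun x => (hr x).ne'
  set M : Matrix IB IB ℝ :=
    Matrix.diagonal c - G.transpose * (Matrix.diagonal r)⁻¹ * G with hMdef
  set S : IA → A := fun x => ∑ y, (G x y : ℂ) • b y with hSdef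
  have hbhat' : ∀ x, bhat x = ((r x : ℂ))⁻¹ • S x := fun x => hbhat x
  -- the inverse of the diagonal matrix
  have hinv : (Matrix.diagonal r)⁻¹ = Matrix.diagonal (fun x => (r x)⁻¹) := by
    refine Matrix.inv_eq_right_inv ?_
    rw [Matrix.diagonal_mul_diagonal, ← Matrix.diagonal_one]
    have h1 : (fun i => r i * (r i)⁻¹) = fun _ => (1 : ℝ) :=
      funext fun x => mul_inv_cancel₀ (hr0 x)
    rw [h1]
  have hMentry : ∀ s y, M s y
      = Matrix.diagonal c s y - ∑ x, G x s * (r x)⁻¹ * G x y := by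
    intro s y
    rw [hMdef, hinv, Matrix.sub_apply, Matrix.mul_assoc]
    congr 1
    simp [Matrix.mul_apply, Matrix.diagonal_apply, ite_mul, mul_ite, zero_mul, mul_zero,
      Finset.mul_sum, mul_assoc]
  -- S x * S x expanded
  have hSsq : ∀ x, S x * S x = ∑ s, ∑ y, ((G x s * G x y : ℝ) : ℂ) • (b s * b y) := by
    intro x
    show (∑ s, (G x s : ℂ) • b s) * (∑ y, (G x y : ℂ) • b y) = _
    rw [Finset.sum_mul_sum]
    refine Finset.sum_congr rfl fun s _ => Finset.sum_congr rfl fun y _ => ?_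
    push_cast
    rw [smul_mul_smul_comm]
  have hax : ∀ x, a x * S x = ∑ y, (G x y : ℂ) • (a x * b y) := by
    intro x
    show a x * (∑ y, (G x y : ℂ) • b y) = _
    rw [Finset.mul_sum]
    exact Finset.sum_congr rfl fun y _ => (mul_smul_comm _ _ _)
  have hxa : ∀ x, S x * a x = a x * S x := by
    intro x
    show (∑ y, (G x y : ℂ) • b y) * a x = a x * (∑ y, (G x y : ℂ) • b y)
    rw [Finset.sum_mul, Finset.mul_sum]
    refine Finset.sum_congr rfl fun y _ => ?_
    rw [smul_mul_assoc, mul_smul_comm, hcomm]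
  -- key identity for each x
  have key1 : ∀ x, ((r x / 2 : ℝ) : ℂ) • (a x - bhat x) ^ 2
      = ((r x / 2 : ℝ) : ℂ) • (1 : A) - (∑ y, (G x y : ℂ) • (a x * b y))
        + (((2 * r x)⁻¹ : ℝ) : ℂ) • (S x * S x) := by
    intro x
    rw [hbhat' x]
    rw [sq, sub_mul, mul_sub, mul_sub, ha_sq, smul_mul_assoc, hxa, mul_smul_comm,
      smul_mul_smul_comm, ← hax]
    have hc : ((r x : ℂ)) ≠ 0 := by exact_mod_cast hr0 x
    match_scalars
    · push_cast; ring
    · push_cast; field_simp; ring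
    · push_cast; field_simp
  -- key identity for the Schur-complement part
  have key2 : (1 / 2 : ℂ) • (∑ s, ∑ y, ((M s y : ℝ) : ℂ) • (b s * b y))
      = (((∑ y, c y) / 2 : ℝ) : ℂ) • (1 : A)
        - ∑ x, (((2 * r x)⁻¹ : ℝ) : ℂ) • (S x * S x) := by
    have hdiag : ∑ s, ∑ y, ((Matrix.diagonal c s y : ℝ) : ℂ) • (b s * b y)
        = ((∑ y, c y : ℝ) : ℂ) • (1 : A) := by
      push_cast
      rw [Finset.sum_smul]
      refine Finset.sum_congr rfl fun s _ => ?_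
      rw [Finset.sum_eq_single s]
      · simp [Matrix.diagonal_apply_eq, hb_sq]
      · intro y _ hy
        simp [Matrix.diagonal_apply_ne' c hy]
      · intro h; exact absurd (Finset.mem_univ s) h
    have hcross : ∑ s, ∑ y, (((∑ x, G x s * (r x)⁻¹ * G x y : ℝ)) : ℂ) • (b s * b y)
        = ∑ x, (((r x)⁻¹ : ℝ) : ℂ) • (S x * S x) := by
      have step : ∀ s y, (((∑ x, G x s * (r x)⁻¹ * G x y : ℝ)) : ℂ) • (b s * b y)
          = ∑ x, ((((r x)⁻¹ : ℝ) : ℂ) * ((G x s * G x y : ℝ) : ℂ)) • (b s * b y) := by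
        intro s y
        rw [← Finset.sum_smul]
        congr 1
        push_cast
        exact Finset.sum_congr rfl fun x _ => by ring
      have rhs : ∀ x, (((r x)⁻¹ : ℝ) : ℂ) • (S x * S x)
          = ∑ s, ∑ y, ((((r x)⁻¹ : ℝ) : ℂ) * ((G x s * G x y : ℝ) : ℂ)) • (b s * b y) := by
        intro x
        rw [hSsq, Finset.smul_sum]
        refine Finset.sum_congr rfl fun s _ => ?_
        rw [Finset.smul_sum]
        exact Finset.sum_congr rfl fun y _ => (mul_smul _ _ _).symm
      simp_rw [step, rhs]
      calc ∑ s, ∑ y, ∑ x, ((((r x)⁻¹ : ℝ) : ℂ) * ((G x s * G x y : ℝ) : ℂ)) • (b s * b y)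
          = ∑ s, ∑ x, ∑ y, ((((r x)⁻¹ : ℝ) : ℂ) * ((G x s * G x y : ℝ) : ℂ)) • (b s * b y) :=
            Finset.sum_congr rfl fun s _ => Finset.sum_comm
        _ = ∑ x, ∑ s, ∑ y, ((((r x)⁻¹ : ℝ) : ℂ) * ((G x s * G x y : ℝ) : ℂ)) • (b s * b y) :=
            Finset.sum_comm
    calc (1 / 2 : ℂ) • (∑ s, ∑ y, ((M s y : ℝ) : ℂ) • (b s * b y))
        = (1 / 2 : ℂ) • (((∑ y, c y : ℝ) : ℂ) • (1 : A)
            - ∑ x, (((r x)⁻¹ : ℝ) : ℂ) • (S x * S x)) := by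
          congr 1
          rw [← hdiag, ← hcross, ← Finset.sum_sub_distrib]
          refine Finset.sum_congr rfl fun s _ => ?_
          rw [← Finset.sum_sub_distrib]
          refine Finset.sum_congr rfl fun y _ => ?_
          rw [← sub_smul, hMentry s y]
          push_cast
          ring_nf
      _ = _ := by
          rw [smul_sub, smul_smul, Finset.smul_sum]
          congr 1
          · match_scalars
            push_cast; ring
          · refine Finset.sum_congr rfl fun x _ => ?_
            rw [smul_smul]
            congr 1
            push_cast
            field_simp
  -- the main identity
  have main1 : (β : ℂ) • (1 : A) - ∑ x, ∑ y, (G x y : ℂ) • (a x * b y)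
      = (∑ x, ((r x / 2 : ℝ) : ℂ) • (a x - bhat x) ^ 2)
        + (1 / 2 : ℂ) • ∑ s, ∑ y, ((M s y : ℝ) : ℂ) • (b s * b y) := by
    rw [key2]
    rw [Finset.sum_congr rfl fun x (_ : x ∈ Finset.univ) => key1 x]
    rw [Finset.sum_add_distrib, Finset.sum_sub_distrib]
    have hsum : ∑ x, ((r x / 2 : ℝ) : ℂ) • (1 : A)
        = (((∑ x, r x) / 2 : ℝ) : ℂ) • (1 : A) := by
      rw [← Finset.sum_smul]
      congr 1
      push_cast
      rw [← Finset.sum_div]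
    rw [hsum]
    have hb' : (β : ℂ) = (((∑ x, r x) / 2 : ℝ) : ℂ) + (((∑ y, c y) / 2 : ℝ) : ℂ) := by
      rw [hβ]; push_cast; ring
    rw [hb', add_smul]
    abel
  refine ⟨main1, ?_⟩
  -- now the sum-of-squares part
  have hdpos : (Matrix.diagonal r).PosDef := Matrix.PosDef.diagonal hr
  haveI : Invertible (Matrix.diagonal r) := hdpos.isUnit.invertible
  have hMps : M.PosSemidef := by
    have hGT : (-G).conjTranspose = -G.transpose := by
      rw [Matrix.conjTranspose_neg, Matrix.conjTranspose_eq_transpose_of_trivial]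
    have h1 : (Matrix.fromBlocks (Matrix.diagonal r) (-G) ((-G).conjTranspose)
        (Matrix.diagonal c)).PosSemidef := by rw [hGT]; exact hblock
    have h2 := (Matrix.PosDef.fromBlocks₁₁ (-G) (Matrix.diagonal c) hdpos).mp h1
    rw [hMdef]
    rw [hGT] at h2
    rw [Matrix.neg_mul, Matrix.mul_neg, Matrix.neg_mul, neg_neg] at h2
    exact h2
  obtain ⟨B, hB⟩ : ∃ B : Matrix IB IB ℝ, M = B.conjTranspose * B := by
    open scoped MatrixOrder in
    exact CStarAlgebra.nonneg_iff_eq_star_mul_self.mp hMps.nonneg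
  have hBentry : ∀ s y, M s y = ∑ i, B i s * B i y := by
    intro s y
    rw [hB]
    simp [Matrix.mul_apply, Matrix.conjTranspose_apply]
  set T : IB → A := fun i => ∑ s, (B i s : ℂ) • b s with hTdef
  have hTsq : ∀ i, T i * T i = ∑ s, ∑ y, ((B i s * B i y : ℝ) : ℂ) • (b s * b y) := by
    intro i
    show (∑ s, (B i s : ℂ) • b s) * (∑ y, (B i y : ℂ) • b y) = _
    rw [Finset.sum_mul_sum]
    refine Finset.sum_congr rfl fun s _ => Finset.sum_congr rfl fun y _ => ?_
    push_cast
    rw [smul_mul_smul_comm]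
  have hsaT : ∀ i, star (T i) = T i := by
    intro i
    show star (∑ s, (B i s : ℂ) • b s) = ∑ s, (B i s : ℂ) • b s
    rw [star_sum]
    refine Finset.sum_congr rfl fun s _ => ?_
    rw [star_smul, hb_sa, Complex.star_def, Complex.conj_ofReal]
  have hsaS : ∀ x, star (S x) = S x := by
    intro x
    show star (∑ y, (G x y : ℂ) • b y) = ∑ y, (G x y : ℂ) • b y
    rw [star_sum]
    refine Finset.sum_congr rfl fun y _ => ?_
    rw [star_smul, hb_sa, Complex.star_def, Complex.conj_ofReal]
  have hsab : ∀ x, star (a x - bhat x) = a x - bhat x := by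
    intro x
    rw [star_sub, ha_sa, hbhat' x, star_smul, hsaS x]
    congr 1
    rw [show ((r x : ℂ))⁻¹ = (((r x)⁻¹ : ℝ) : ℂ) by push_cast; ring,
      Complex.star_def, Complex.conj_ofReal]
  set q' : IA ⊕ IB → A := Sum.elim
    (fun x => ((Real.sqrt (r x / 2) : ℝ) : ℂ) • (a x - bhat x))
    (fun i => ((Real.sqrt (1 / 2) : ℝ) : ℂ) • T i) with hq'def
  have sq1 : ∀ x, star (q' (Sum.inl x)) * q' (Sum.inl x)
      = ((r x / 2 : ℝ) : ℂ) • (a x - bhat x) ^ 2 := by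
    intro x
    show star (((Real.sqrt (r x / 2) : ℝ) : ℂ) • (a x - bhat x))
      * (((Real.sqrt (r x / 2) : ℝ) : ℂ) • (a x - bhat x)) = _
    rw [star_smul, hsab, smul_mul_smul_comm, sq]
    congr 1
    rw [Complex.star_def, Complex.conj_ofReal, ← Complex.ofReal_mul,
      Real.mul_self_sqrt (by have := (hr x).le; linarith)]
  have sq2 : ∀ i, star (q' (Sum.inr i)) * q' (Sum.inr i)
      = ((1 / 2 : ℝ) : ℂ) • (T i * T i) := by
    intro i
    show star (((Real.sqrt (1 / 2) : ℝ) : ℂ) • T i)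
      * (((Real.sqrt (1 / 2) : ℝ) : ℂ) • T i) = _
    rw [star_smul, hsaT, smul_mul_smul_comm]
    congr 1
    rw [Complex.star_def, Complex.conj_ofReal, ← Complex.ofReal_mul,
      Real.mul_self_sqrt (by norm_num)]
  have hq' : ∑ j, star (q' j) * q' j
      = (∑ x, ((r x / 2 : ℝ) : ℂ) • (a x - bhat x) ^ 2)
        + (1 / 2 : ℂ) • ∑ s, ∑ y, ((M s y : ℝ) : ℂ) • (b s * b y) := by
    rw [Fintype.sum_sum_type]
    congr 1
    · exact Finset.sum_congr rfl fun x _ => sq1 x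
    · calc ∑ i, star (q' (Sum.inr i)) * q' (Sum.inr i)
          = ∑ i, ((1 / 2 : ℝ) : ℂ) • (T i * T i) :=
            Finset.sum_congr rfl fun i _ => sq2 i
        _ = ((1 / 2 : ℝ) : ℂ) • ∑ i, (T i * T i) := (Finset.smul_sum).symm
        _ = ((1 / 2 : ℝ) : ℂ) • ∑ s, ∑ y, ((M s y : ℝ) : ℂ) • (b s * b y) := by
            congr 1
            simp_rw [hTsq]
            rw [Finset.sum_comm]
            refine Finset.sum_congr rfl fun s _ => ?_
            rw [Finset.sum_comm]
            refine Finset.sum_congr rfl fun y _ => ?_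
            rw [← Finset.sum_smul, hBentry s y]
            congr 1
            push_cast
            rfl
        _ = (1 / 2 : ℂ) • ∑ s, ∑ y, ((M s y : ℝ) : ℂ) • (b s * b y) := by norm_num
  refine ⟨Fintype.card (IA ⊕ IB), fun i => q' ((Fintype.equivFin (IA ⊕ IB)).symm i), ?_⟩
  rw [main1, ← hq']
  exact (Equiv.sum_comp (Fintype.equivFin (IA ⊕ IB)).symm fun j => star (q' j) * q' j).symm
end

section
/- Let H be a finite-dimensional complex Hilbert space and B₁, ..., B_n self-adjoint operators on H with B_y² = 1 for each y, all pairwise commuting with self-adjoint operators A₁, ..., A_m satisfying A_x² = 1. Let G be a real m × n matrix with ∑_y |G_{xy}| ≤ 1 for each x, and suppose for feasible dual variables (r, c) of the XOR SDP that β = (1/2)(∑ r_x + ∑ c_y). Then for any unit vector ψ, ∑_{x,y} G_{xy} ⟨ψ, A_x B_y ψ⟩ ≤ β. -/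
open scoped InnerProductSpace
open ContinuousLinearMap

lemma gram_quadform_nonneg {H : Type*} [NormedAddCommGroup H] [InnerProductSpace ℂ H]
    {ι : Type*} [Fintype ι] [DecidableEq ι]
    (M : Matrix ι ι ℝ) (hM : M.PosSemidef) (w : ι → H) :
    0 ≤ ∑ i, ∑ j, M i j * (⟪w i, w j⟫_ℂ).re := by
  obtain ⟨L, hL⟩ : ∃ L : Matrix ι ι ℝ, M = L.conjTranspose * L := by
    open scoped MatrixOrder Matrix.Norms.L2Operator in
    obtain ⟨L, hL⟩ := CStarAlgebra.nonneg_iff_eq_star_mul_self.mp hM.nonneg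
    exact ⟨L, by simpa [sub_zero, Matrix.star_eq_conjTranspose] using hL⟩
  have hM' : ∀ i j, M i j = ∑ k, L k i * L k j := by
    intro i j
    rw [hL]
    simp [Matrix.mul_apply, Matrix.conjTranspose_apply]
  have key : ∑ i, ∑ j, M i j * (⟪w i, w j⟫_ℂ).re
      = ∑ k, ‖∑ i, (L k i : ℂ) • w i‖ ^ 2 := by
    have hterm : ∀ k, ‖∑ i, (L k i : ℂ) • w i‖ ^ 2
        = ∑ i, ∑ j, L k i * L k j * (⟪w i, w j⟫_ℂ).re := by
      intro k
      rw [← inner_self_eq_norm_sq (𝕜 := ℂ), sum_inner, map_sum]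
      refine Finset.sum_congr rfl fun i _ => ?_
      rw [inner_sum, map_sum]
      refine Finset.sum_congr rfl fun j _ => ?_
      rw [inner_smul_left, inner_smul_right, Complex.conj_ofReal, ← mul_assoc,
        ← Complex.ofReal_mul]
      exact Complex.re_ofReal_mul _ _
    simp_rw [hterm, hM', Finset.sum_mul]
    calc ∑ i, ∑ j, ∑ k, L k i * L k j * (⟪w i, w j⟫_ℂ).re
        = ∑ i, ∑ k, ∑ j, L k i * L k j * (⟪w i, w j⟫_ℂ).re :=
          Finset.sum_congr rfl fun i _ => Finset.sum_comm
      _ = ∑ k, ∑ i, ∑ j, L k i * L k j * (⟪w i, w j⟫_ℂ).re := Finset.sum_comm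
  rw [key]
  exact Finset.sum_nonneg fun k _ => by positivity

lemma sa_inner {H : Type*} [NormedAddCommGroup H] [InnerProductSpace ℂ H]
    [FiniteDimensional ℂ H] (T : H →L[ℂ] H) (hT : IsSelfAdjoint T) (u v : H) :
    ⟪T u, v⟫_ℂ = ⟪u, T v⟫_ℂ := by
  conv_lhs => rw [← hT.adjoint_eq]
  exact ContinuousLinearMap.adjoint_inner_left T v u

/-- SDP (Tsirelson) upper bound on the commuting-operator bias of an XOR game. -/
theorem stmt6 {H : Type*} [NormedAddCommGroup H] [InnerProductSpace ℂ H]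
    [FiniteDimensional ℂ H]
    (m n : ℕ) (A : Fin m → H →L[ℂ] H) (B : Fin n → H →L[ℂ] H)
    (hAsa : ∀ x, IsSelfAdjoint (A x)) (hBsa : ∀ y, IsSelfAdjoint (B y))
    (hAsq : ∀ x, A x ∘L A x = 1) (hBsq : ∀ y, B y ∘L B y = 1)
    (hcomm : ∀ x y, A x ∘L B y = B y ∘L A x)
    (G : Matrix (Fin m) (Fin n) ℝ) (habs : ∀ x, ∑ y, |G x y| ≤ 1)
    (r : Fin m → ℝ) (c : Fin n → ℝ) (hr : ∀ x, 0 < r x)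
    (hblock : (Matrix.fromBlocks (Matrix.diagonal r) (-G)
        (-G.transpose) (Matrix.diagonal c)).PosSemidef)
    (β : ℝ) (hβ : β = (1 / 2) * (∑ x, r x + ∑ y, c y))
    (ψ : H) (hψ : ‖ψ‖ = 1) :
    ∑ x, ∑ y, G x y * (⟪ψ, (A x ∘L B y) ψ⟫_ℂ).re ≤ β := by
  set w : Fin m ⊕ Fin n → H := Sum.elim (fun x => A x ψ) (fun y => B y ψ) with hw
  have hnonneg := gram_quadform_nonneg _ hblock w
  have hψ2 : (⟪ψ, ψ⟫_ℂ).re = 1 := by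
    have := inner_self_eq_norm_sq (𝕜 := ℂ) ψ
    rw [hψ] at this
    simpa using this
  have hAnorm : ∀ x, (⟪A x ψ, A x ψ⟫_ℂ).re = 1 := by
    intro x
    have h : ⟪A x ψ, A x ψ⟫_ℂ = ⟪ψ, (A x ∘L A x) ψ⟫_ℂ := by
      rw [ContinuousLinearMap.comp_apply, sa_inner (A x) (hAsa x)]
    rw [h, hAsq x]
    simpa using hψ2
  have hBnorm : ∀ y, (⟪B y ψ, B y ψ⟫_ℂ).re = 1 := by
    intro y
    have h : ⟪B y ψ, B y ψ⟫_ℂ = ⟪ψ, (B y ∘L B y) ψ⟫_ℂ := by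
      rw [ContinuousLinearMap.comp_apply, sa_inner (B y) (hBsa y)]
    rw [h, hBsq y]
    simpa using hψ2
  have hAB : ∀ x y, (⟪A x ψ, B y ψ⟫_ℂ).re = (⟪ψ, (A x ∘L B y) ψ⟫_ℂ).re := by
    intro x y
    rw [ContinuousLinearMap.comp_apply, ← sa_inner (A x) (hAsa x)]
  have hBA : ∀ x y, (⟪B y ψ, A x ψ⟫_ℂ).re = (⟪A x ψ, B y ψ⟫_ℂ).re := by
    intro x y
    rw [← inner_conj_symm (B y ψ) (A x ψ), Complex.conj_re]
  rw [Fintype.sum_sum_type] at hnonneg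
  have expand : (∑ i : Fin m, ∑ j, (Matrix.fromBlocks (Matrix.diagonal r) (-G)
        (-G.transpose) (Matrix.diagonal c)) (Sum.inl i) j * (⟪w (Sum.inl i), w j⟫_ℂ).re)
      + ∑ i : Fin n, ∑ j, (Matrix.fromBlocks (Matrix.diagonal r) (-G)
        (-G.transpose) (Matrix.diagonal c)) (Sum.inr i) j * (⟪w (Sum.inr i), w j⟫_ℂ).re
      = ∑ x, r x + ∑ y, c y - 2 * ∑ x, ∑ y, G x y * (⟪ψ, (A x ∘L B y) ψ⟫_ℂ).re := by
    simp only [Fintype.sum_sum_type, hw, Sum.elim_inl, Sum.elim_inr,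
      Matrix.fromBlocks_apply₁₁, Matrix.fromBlocks_apply₁₂, Matrix.fromBlocks_apply₂₁,
      Matrix.fromBlocks_apply₂₂, Matrix.neg_apply, Matrix.transpose_apply]
    have h1 : ∀ x : Fin m, ∑ j : Fin m, Matrix.diagonal r x j * (⟪A x ψ, A j ψ⟫_ℂ).re = r x := by
      intro x
      rw [Finset.sum_eq_single x]
      · rw [Matrix.diagonal_apply_eq, hAnorm x, mul_one]
      · intro b _ hb; simp [Matrix.diagonal_apply_ne' r hb]
      · simp
    have h2 : ∀ y : Fin n, ∑ j : Fin n, Matrix.diagonal c y j * (⟪B y ψ, B j ψ⟫_ℂ).re = c y := by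
      intro y
      rw [Finset.sum_eq_single y]
      · rw [Matrix.diagonal_apply_eq, hBnorm y, mul_one]
      · intro b _ hb; simp [Matrix.diagonal_apply_ne' c hb]
      · simp
    simp only [Finset.sum_add_distrib, h1, h2]
    have h3 : ∀ y : Fin n, ∀ x : Fin m, (⟪B y ψ, A x ψ⟫_ℂ).re = (⟪ψ, (A x ∘L B y) ψ⟫_ℂ).re := by
      intro y x; rw [hBA, hAB]
    have h4 : ∀ x y, (⟪A x ψ, B y ψ⟫_ℂ).re = (⟪ψ, (A x ∘L B y) ψ⟫_ℂ).re := hAB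
    simp only [h3, h4]
    rw [Finset.sum_comm (s := (Finset.univ : Finset (Fin n)))]
    simp only [neg_mul, Finset.sum_neg_distrib]
    ring
  rw [expand] at hnonneg
  rw [hβ]
  linarith
end

section
/- Let H be a finite-dimensional Hilbert space, ψ a state vector, {A_α} Kraus operators with ∑_α A_α* A_α = 1, signs ε_α ∈ {±1}, and B a self-adjoint operator with ‖B‖ ≤ 1. Let r ∈ [0,1]. If √(∑_α ⟨A_α ψ, B² A_α ψ⟩) − ∑_α ε_α ⟨A_α ψ, B A_α ψ⟩ ≤ ε' and (r − √(∑_α ⟨A_α ψ, B² A_α ψ⟩))² ≤ δ, then ∑_α ‖(r·1 − ε_α B) A_α ψ‖² ≤ δ + 2ε'. -/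
open scoped InnerProductSpace
open ContinuousLinearMap

/-- key estimate in the self-testing lemma for compiled XOR games. -/
theorem stmt7 {H : Type*} [NormedAddCommGroup H] [InnerProductSpace ℂ H]
    [FiniteDimensional ℂ H]
    {Λ : Type*} [Fintype Λ]
    (ψ : H) (hψ : ‖ψ‖ = 1)
    (A : Λ → H →L[ℂ] H)
    (hA : ∑ α, ContinuousLinearMap.adjoint (A α) ∘L A α = 1)
    (ε : Λ → ℝ) (hε : ∀ α, ε α = 1 ∨ ε α = -1)
    (B : H →L[ℂ] H) (hB : IsSelfAdjoint B) (hBnorm : ‖B‖ ≤ 1)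
    (r : ℝ) (hr0 : 0 ≤ r) (hr1 : r ≤ 1)
    (ε' δ : ℝ) (hε' : 0 ≤ ε')
    (h1 : Real.sqrt (∑ α, (⟪A α ψ, (B ∘L B) (A α ψ)⟫_ℂ).re)
        - ∑ α, ε α * (⟪A α ψ, B (A α ψ)⟫_ℂ).re ≤ ε')
    (h2 : (r - Real.sqrt (∑ α, (⟪A α ψ, (B ∘L B) (A α ψ)⟫_ℂ).re)) ^ 2 ≤ δ) :
    ∑ α, ‖((r : ℂ) • (1 : H →L[ℂ] H) - (ε α : ℂ) • B) (A α ψ)‖ ^ 2 ≤ δ + 2 * ε' := by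
  set v : Λ → H := fun α => A α ψ with hv
  -- re ⟪v, B² v⟫ = ‖B v‖²
  have hre2 : ∀ α, (⟪v α, (B ∘L B) (v α)⟫_ℂ).re = ‖B (v α)‖ ^ 2 := by
    intro α
    have h : (⟪v α, (B ∘L B) (v α)⟫_ℂ) = ⟪B (v α), B (v α)⟫_ℂ := by
      rw [ContinuousLinearMap.comp_apply, ← ContinuousLinearMap.adjoint_inner_left,
        hB.adjoint_eq]
    rw [h]
    exact inner_self_eq_norm_sq (𝕜 := ℂ) _
  set S2 : ℝ := ∑ α, ‖B (v α)‖ ^ 2 with hS2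
  set S1 : ℝ := ∑ α, ε α * (⟪v α, B (v α)⟫_ℂ).re with hS1
  have hS2eq : (∑ α, (⟪A α ψ, (B ∘L B) (A α ψ)⟫_ℂ).re) = S2 := by
    simp only [hS2]
    exact Finset.sum_congr rfl fun α _ => hre2 α
  rw [hS2eq] at h1 h2
  have hS2nn : 0 ≤ S2 := Finset.sum_nonneg fun α _ => sq_nonneg _
  -- sum of ‖v α‖² = 1
  have hsumv : ∑ α, ‖v α‖ ^ 2 = 1 := by
    have : ∀ α : Λ, (‖v α‖ ^ 2 : ℝ) = (⟪ψ, (ContinuousLinearMap.adjoint (A α) ∘L A α) ψ⟫_ℂ).re := by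
      intro α
      rw [ContinuousLinearMap.comp_apply, ContinuousLinearMap.adjoint_inner_right]
      exact (inner_self_eq_norm_sq (𝕜 := ℂ) _).symm
    calc ∑ α, ‖v α‖ ^ 2 = ∑ α, (⟪ψ, (ContinuousLinearMap.adjoint (A α) ∘L A α) ψ⟫_ℂ).re :=
          Finset.sum_congr rfl fun α _ => this α
      _ = (⟪ψ, (∑ α, ContinuousLinearMap.adjoint (A α) ∘L A α) ψ⟫_ℂ).re := by
          rw [ContinuousLinearMap.sum_apply, inner_sum, Complex.re_sum]
      _ = 1 := by
          rw [hA]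
          have h := inner_self_eq_norm_sq (𝕜 := ℂ) ψ
          simp only [ContinuousLinearMap.one_apply]
          rw [show ((⟪ψ, ψ⟫_ℂ).re) = RCLike.re ⟪ψ, ψ⟫_ℂ from rfl, h, hψ]; norm_num
  -- per-term expansion
  have hterm : ∀ α, ‖((r : ℂ) • (1 : H →L[ℂ] H) - (ε α : ℂ) • B) (A α ψ)‖ ^ 2
      = r ^ 2 * ‖v α‖ ^ 2 - 2 * (r * (ε α * (⟪v α, B (v α)⟫_ℂ).re)) + ‖B (v α)‖ ^ 2 := by
    intro α
    have happ : ((r : ℂ) • (1 : H →L[ℂ] H) - (ε α : ℂ) • B) (A α ψ)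
        = (r : ℂ) • (v α) - (ε α : ℂ) • (B (v α)) := by
      simp [hv]
    rw [happ, @norm_sub_sq ℂ]
    have hεsq : |ε α| = 1 := by rcases hε α with h | h <;> simp [h]
    have h1' : ‖(r : ℂ) • v α‖ ^ 2 = r ^ 2 * ‖v α‖ ^ 2 := by
      rw [norm_smul]; simp [abs_of_nonneg hr0, mul_pow]
    have h2' : ‖(ε α : ℂ) • B (v α)‖ ^ 2 = ‖B (v α)‖ ^ 2 := by
      rw [norm_smul]; simp [hεsq]
    have h3' : (RCLike.re ⟪(r : ℂ) • v α, (ε α : ℂ) • B (v α)⟫_ℂ)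
        = r * (ε α * (⟪v α, B (v α)⟫_ℂ).re) := by
      rw [inner_smul_left, inner_smul_right]
      simp [Complex.mul_re, Complex.conj_ofReal]
      try ring
    rw [h1', h2', h3']
  rw [Finset.sum_congr rfl fun α _ => hterm α]
  rw [Finset.sum_add_distrib, Finset.sum_sub_distrib, ← Finset.mul_sum, ← Finset.mul_sum,
    ← Finset.mul_sum, hsumv]
  -- now goal: r^2 * 1 - 2*(r*S1) + S2 ≤ δ + 2ε'
  have hS1le : S1 ≤ Real.sqrt S2 := by
    have step1 : S1 ≤ ∑ α, ‖v α‖ * ‖B (v α)‖ := by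
      apply Finset.sum_le_sum
      intro α _
      calc ε α * (⟪v α, B (v α)⟫_ℂ).re ≤ |(⟪v α, B (v α)⟫_ℂ).re| := by
            rcases hε α with h | h <;> simp [h] <;> [exact le_abs_self _; exact neg_le_abs _]
        _ ≤ ‖⟪v α, B (v α)⟫_ℂ‖ := Complex.abs_re_le_norm _
        _ ≤ ‖v α‖ * ‖B (v α)‖ := norm_inner_le_norm _ _
    have step2 : (∑ α, ‖v α‖ * ‖B (v α)‖) ^ 2 ≤ (∑ α, ‖v α‖ ^ 2) * (∑ α, ‖B (v α)‖ ^ 2) :=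
      Finset.sum_mul_sq_le_sq_mul_sq Finset.univ _ _
    rw [hsumv, one_mul] at step2
    have hnn : 0 ≤ ∑ α, ‖v α‖ * ‖B (v α)‖ :=
      Finset.sum_nonneg fun α _ => mul_nonneg (norm_nonneg _) (norm_nonneg _)
    have := Real.sqrt_le_sqrt step2
    rw [Real.sqrt_sq hnn] at this
    exact step1.trans this
  set s : ℝ := Real.sqrt S2 with hs
  have hssq : s ^ 2 = S2 := Real.sq_sqrt hS2nn
  have hsnn : 0 ≤ s := Real.sqrt_nonneg _
  nlinarith [mul_nonneg (sub_nonneg.2 hr1) (sub_nonneg.2 hS1le)]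
end
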